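/- arXiv:1304.5739 — 3 statements merged into one kernel-verified Lean document; each statement's English description precedes it below -/
import Mathlib

section
/- Let B = (B₁,B₂,B₃) ∈ ℝ³. The 6×6 symmetric matrix M given by rows (1,0,0,B₂,-B₁,0), (0,1,0,B₃,0,-B₁), (0,0,1,0,B₃,-B₂), (B₂,B₃,0,1,0,0), (-B₁,0,B₃,0,1,0), (0,-B₁,-B₂,0,0,1) has eigenvalues 1 (with multiplicity 2) and 1 ± √(B₁²+B₂²+B₃²) (each with multiplicity 2). -/
open Polynomial

/-- The 6×6 leading matrix of the symmetric hyperbolic system governing the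
propagation of the antisymmetry `R_{ijkl} = -R_{ijlk}`. -/
def leadingMatrix6 (B : Fin 3 → ℝ) : Matrix (Fin 6) (Fin 6) ℝ :=
  !![1, 0, 0, B 1, -B 0, 0;
     0, 1, 0, B 2, 0, -B 0;
     0, 0, 1, 0, B 2, -B 1;
     B 1, B 2, 0, 1, 0, 0;
     -B 0, 0, B 2, 0, 1, 0;
     0, -B 0, -B 1, 0, 0, 1]

lemma key_aux (s q : ℝ) (h : s ^ 2 = q) :
    (X - C (1 + s)) ^ 2 * (X - C (1 - s)) ^ 2 = ((X - C 1) ^ 2 - C q) ^ 2 := by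
  subst h
  simp only [map_add, map_sub, _root_.map_one, map_pow]
  ring

lemma eval_det_aux {n : Type*} [DecidableEq n] [Fintype n]
    (M : Matrix n n ℝ[X]) (r : ℝ) :
    Polynomial.eval r M.det = (M.map (Polynomial.eval r)).det := by
  have := RingHom.map_det (Polynomial.evalRingHom r) M
  simpa [RingHom.mapMatrix_apply] using this

set_option maxHeartbeats 1000000 in
/-- The eigenvalues of the 6×6 leading matrix are `1` and
`1 ± √(B₁²+B₂²+B₃²)`, each with multiplicity 2, expressed via the
characteristic polynomial. -/
theorem stmt_1 (B : Fin 3 → ℝ) :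
    (leadingMatrix6 B).charpoly =
      (X - C 1) ^ 2 *
        (X - C (1 + Real.sqrt (B 0 ^ 2 + B 1 ^ 2 + B 2 ^ 2))) ^ 2 *
        (X - C (1 - Real.sqrt (B 0 ^ 2 + B 1 ^ 2 + B 2 ^ 2))) ^ 2 := by
  have hs : Real.sqrt (B 0 ^ 2 + B 1 ^ 2 + B 2 ^ 2) ^ 2 = B 0 ^ 2 + B 1 ^ 2 + B 2 ^ 2 :=
    Real.sq_sqrt (by positivity)
  have key : (X - C (1 + Real.sqrt (B 0 ^ 2 + B 1 ^ 2 + B 2 ^ 2))) ^ 2 *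
      (X - C (1 - Real.sqrt (B 0 ^ 2 + B 1 ^ 2 + B 2 ^ 2))) ^ 2 =
      ((X - C 1) ^ 2 - C (B 0 ^ 2 + B 1 ^ 2 + B 2 ^ 2)) ^ 2 :=
    key_aux _ _ hs
  rw [mul_assoc, key]
  set A : Matrix (Fin 3) (Fin 3) ℝ := !![B 1, -B 0, 0; B 2, 0, -B 0; 0, B 2, -B 1] with hA
  have hblock : leadingMatrix6 B =
      (Matrix.reindex finSumFinEquiv finSumFinEquiv) (Matrix.fromBlocks 1 A A.transpose 1) := by
    ext i j
    fin_cases i <;> fin_cases j <;> rfl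
  rw [hblock, Matrix.charpoly_reindex]
  apply Polynomial.eq_of_infinite_eval_eq
  apply Set.Infinite.mono _ (Set.Ioi_infinite (1 : ℝ))
  intro x hx
  simp only [Set.mem_setOf_eq]
  have hx1 : x - 1 ≠ 0 := sub_ne_zero.2 (ne_of_gt hx)
  rw [Matrix.charpoly, eval_det_aux, Matrix.charmatrix_fromBlocks, Matrix.fromBlocks_map]
  have h11 : ((1 : Matrix (Fin 3) (Fin 3) ℝ).charmatrix).map (Polynomial.eval x) =
      (x - 1) • (1 : Matrix (Fin 3) (Fin 3) ℝ) := by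
    ext i j
    by_cases h : i = j <;>
      simp [Matrix.charmatrix_apply, Matrix.one_apply, h, Matrix.diagonal_apply, sub_smul]
  have h12 : ((-(A.map C)).map (Polynomial.eval x)) = -A := by
    ext i j; simp
  have h21 : ((-(A.transpose.map C)).map (Polynomial.eval x)) = -A.transpose := by
    ext i j; simp
  rw [h11, h12, h21]
  haveI : Invertible ((x - 1) • (1 : Matrix (Fin 3) (Fin 3) ℝ)) :=
    ⟨(x - 1)⁻¹ • (1 : Matrix (Fin 3) (Fin 3) ℝ),
      by rw [smul_mul_smul_comm, inv_mul_cancel₀ hx1, one_mul, one_smul],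
      by rw [smul_mul_smul_comm, mul_inv_cancel₀ hx1, one_mul, one_smul]⟩
  rw [Matrix.det_fromBlocks₂₂]
  have hinv : ⅟((x - 1) • (1 : Matrix (Fin 3) (Fin 3) ℝ)) =
      (x - 1)⁻¹ • (1 : Matrix (Fin 3) (Fin 3) ℝ) :=
    invOf_eq_right_inv
      (by rw [smul_mul_smul_comm, mul_inv_cancel₀ hx1, one_mul, one_smul])
  rw [hinv]
  rw [Matrix.det_smul, Matrix.det_one]
  have hASm : (-A) * ((x - 1)⁻¹ • (1 : Matrix (Fin 3) (Fin 3) ℝ)) * (-A.transpose) =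
      (x - 1)⁻¹ • (A * A.transpose) := by
    rw [Matrix.mul_smul, Matrix.mul_one, Matrix.smul_mul, neg_mul_neg]
  rw [hASm]
  rw [Matrix.det_fin_three]
  simp only [Matrix.sub_apply, Matrix.smul_apply, Matrix.one_apply, Matrix.mul_apply,
    Fin.sum_univ_three, hA, Matrix.transpose_apply, Matrix.cons_val', Matrix.cons_val, Matrix.cons_val_zero,
    Matrix.cons_val_one, Matrix.head_cons, Matrix.empty_val', Matrix.cons_val_fin_one,
    Matrix.head_fin_const, Matrix.of_apply, smul_eq_mul]
  norm_num [Fin.ext_iff]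
  field_simp
  ring
end

section
/- Let B = (B₁,B₂,B₃) ∈ ℝ³ with B₁² + B₂² + B₃² < 1. Then the 6×6 symmetric matrix from the previous statement is positive definite. -/
private lemma v0 {α : Type*} (a b c d e f : α) : ![a,b,c,d,e,f] 0 = a := rfl
private lemma v1 {α : Type*} (a b c d e f : α) : ![a,b,c,d,e,f] 1 = b := rfl
private lemma v2 {α : Type*} (a b c d e f : α) : ![a,b,c,d,e,f] 2 = c := rfl
private lemma v3 {α : Type*} (a b c d e f : α) : ![a,b,c,d,e,f] 3 = d := rfl
private lemma v4 {α : Type*} (a b c d e f : α) : ![a,b,c,d,e,f] 4 = e := rfl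
private lemma v5 {α : Type*} (a b c d e f : α) : ![a,b,c,d,e,f] 5 = f := rfl

theorem stmt_2 (B : Fin 3 → ℝ) (hB : B 0 ^ 2 + B 1 ^ 2 + B 2 ^ 2 < 1) :
    (leadingMatrix6 B).PosDef := by
  rw [Matrix.posDef_iff_dotProduct_mulVec]
  constructor
  · ext i j
    fin_cases i <;> fin_cases j <;> rfl
  · intro x hx
    obtain ⟨i, hi⟩ := Function.ne_iff.mp hx
    rw [Pi.zero_apply] at hi
    have hpos : 0 < x i ^ 2 := by positivity
    have hsum' : 0 < ∑ j, x j ^ 2 :=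
      Finset.sum_pos' (fun j _ => sq_nonneg _) ⟨i, Finset.mem_univ i, hpos⟩
    rw [Fin.sum_univ_six] at hsum'
    have key : dotProduct (star x) ((leadingMatrix6 B).mulVec x) =
        x 0 ^ 2 + x 1 ^ 2 + x 2 ^ 2 + x 3 ^ 2 + x 4 ^ 2 + x 5 ^ 2 +
        2 * (B 1 * x 0 * x 3 - B 0 * x 0 * x 4 + B 2 * x 1 * x 3 - B 0 * x 1 * x 5 +
          B 2 * x 2 * x 4 - B 1 * x 2 * x 5) := by
      simp only [leadingMatrix6, Matrix.mulVec, dotProduct, Fin.sum_univ_six,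
        Matrix.of_apply, v0, v1, v2, v3, v4, v5, star_trivial, Pi.star_apply]
      ring
    rw [key]
    by_cases hu : 0 < x 0 ^ 2 + x 1 ^ 2 + x 2 ^ 2
    · nlinarith [sq_nonneg (x 3 + B 1 * x 0 + B 2 * x 1),
        sq_nonneg (x 4 + B 2 * x 2 - B 0 * x 0),
        sq_nonneg (x 5 - B 0 * x 1 - B 1 * x 2),
        sq_nonneg (B 2 * x 0 - B 1 * x 1 + B 0 * x 2),
        mul_pos (sub_pos.mpr hB) hu]
    · push_neg at hu
      have h0 : x 0 = 0 := by nlinarith [sq_nonneg (x 0), sq_nonneg (x 1), sq_nonneg (x 2)]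
      have h1 : x 1 = 0 := by nlinarith [sq_nonneg (x 0), sq_nonneg (x 1), sq_nonneg (x 2)]
      have h2 : x 2 = 0 := by nlinarith [sq_nonneg (x 0), sq_nonneg (x 1), sq_nonneg (x 2)]
      rw [h0, h1, h2] at hsum' ⊢
      nlinarith [hsum']
end

section
/- Suppose the symmetric part S_{ij}(t) = ω^i_{lj}(t) + ω^j_{li}(t) (for fixed l and each pair i,j) satisfies the linear ODE system ∂₀ S_{ij} = X_i^p S_{pj} + X_j^p S_{pi} with continuous coefficients X, and S_{ij}(0) = 0. Then ω^k_{ij}(t) = -ω^j_{ik}(t) for all t. -/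
open Finset

lemma aux_zero_of_linear_bound {E : Type*} [NormedAddCommGroup E] [NormedSpace ℝ E]
    {f f' : ℝ → E} (hf : ∀ t, HasDerivAt f (f' t) t) {C : ℝ → ℝ} (hC : Continuous C)
    (hb : ∀ t, ‖f' t‖ ≤ C t * ‖f t‖) (h0 : f 0 = 0) {t : ℝ} (ht : 0 ≤ t) : f t = 0 := by
  obtain ⟨K, hK⟩ : ∃ K, ∀ s ∈ Set.Icc (0:ℝ) t, ‖C s‖ ≤ K :=
    isCompact_Icc.exists_bound_of_continuousOn hC.continuousOn
  have key := norm_le_gronwallBound_of_norm_deriv_right_le (f := f) (f' := f')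
    (δ := 0) (K := K) (ε := 0) (a := 0) (b := t)
    (fun s _ => (hf s).continuousAt.continuousWithinAt)
    (fun x _ => (hf x).hasDerivWithinAt)
    (by simp [h0])
    (fun x hx => by
      have h1 : C x ≤ K := (le_abs_self _).trans (hK x (Set.mem_Icc_of_Ico hx))
      have := (hb x).trans (mul_le_mul_of_nonneg_right h1 (norm_nonneg _))
      linarith)
  have := key t (Set.mem_Icc.mpr ⟨ht, le_rfl⟩)
  rw [gronwallBound_ε0_δ0] at this
  exact norm_le_zero_iff.mp this

lemma aux_zero_of_linear_bound' {E : Type*} [NormedAddCommGroup E] [NormedSpace ℝ E]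
    {f f' : ℝ → E} (hf : ∀ t, HasDerivAt f (f' t) t) {C : ℝ → ℝ} (hC : Continuous C)
    (hb : ∀ t, ‖f' t‖ ≤ C t * ‖f t‖) (h0 : f 0 = 0) (t : ℝ) : f t = 0 := by
  rcases le_total 0 t with ht | ht
  · exact aux_zero_of_linear_bound hf hC hb h0 ht
  · have hg : ∀ s, HasDerivAt (fun s => f (-s)) ((-1 : ℝ) • f' (-s)) s := fun s =>
      HasDerivAt.scomp s (hf (-s)) (hasDerivAt_neg s)
    have := aux_zero_of_linear_bound (f := fun s => f (-s)) (f' := fun s => (-1 : ℝ) • f' (-s))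
      hg (C := fun s => C (-s)) (hC.comp continuous_neg)
      (fun s => by simpa using hb (-s)) (by simpa using h0) (t := -t) (by linarith)
    simpa using this

/-- Propagation of the antisymmetry of the spatial connection coefficients
(part of Lemma 3.2): if the symmetric part `S_{ij} = ω^i_{lj} + ω^j_{li}`
(for each fixed `l`) satisfies the linear ODE system
`∂₀ S_{ij} = X_i^p S_{pj} + X_j^p S_{pi}` with continuous coefficients `X` and
vanishes at `t = 0`, then `ω^k_{ij}(t) = -ω^j_{ik}(t)` for all `t`.
Here `ω t k i j` denotes `ω^k_{ij}(t)`. -/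
theorem stmt_6 (ω : ℝ → Fin 3 → Fin 3 → Fin 3 → ℝ)
    (X : ℝ → Fin 3 → Fin 3 → ℝ) (hX : Continuous X)
    (hS : ∀ (l i j : Fin 3) (t : ℝ),
      HasDerivAt (fun s => ω s i l j + ω s j l i)
        ((∑ p, X t i p * (ω t p l j + ω t j l p)) +
          ∑ p, X t j p * (ω t p l i + ω t i l p)) t)
    (h0 : ∀ l i j : Fin 3, ω 0 i l j + ω 0 j l i = 0) :
    ∀ (t : ℝ) (k i j : Fin 3), ω t k i j = -ω t j i k := by
  set S : ℝ → Fin 3 → Fin 3 → Fin 3 → ℝ := fun t l i j => ω t i l j + ω t j l i with hSdef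
  set S' : ℝ → Fin 3 → Fin 3 → Fin 3 → ℝ := fun t l i j =>
    (∑ p, X t i p * (ω t p l j + ω t j l p)) +
      ∑ p, X t j p * (ω t p l i + ω t i l p) with hS'def
  have hXc : ∀ i p : Fin 3, Continuous fun t => X t i p := fun i p =>
    (continuous_apply p).comp ((continuous_apply i).comp hX)
  have hderiv : ∀ t, HasDerivAt S (S' t) t := by
    intro t
    rw [hasDerivAt_pi]; intro l
    rw [hasDerivAt_pi]; intro i
    rw [hasDerivAt_pi]; intro j
    exact hS l i j t
  have hCc : Continuous fun t => 2 * ∑ i, ∑ p, |X t i p| := by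
    apply Continuous.mul continuous_const
    exact continuous_finset_sum _ fun i _ => continuous_finset_sum _ fun p _ => (hXc i p).abs
  have hb : ∀ t, ‖S' t‖ ≤ (2 * ∑ i, ∑ p, |X t i p|) * ‖S t‖ := by
    intro t
    have hCnn : 0 ≤ (2 * ∑ i, ∑ p, |X t i p|) * ‖S t‖ := by
      apply mul_nonneg _ (norm_nonneg _)
      positivity
    rw [pi_norm_le_iff_of_nonneg hCnn]; intro l
    rw [pi_norm_le_iff_of_nonneg hCnn]; intro i
    rw [pi_norm_le_iff_of_nonneg hCnn]; intro j
    have hSle : ∀ p q r : Fin 3, |S t p q r| ≤ ‖S t‖ := by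
      intro p q r
      calc |S t p q r| = ‖S t p q r‖ := rfl
        _ ≤ ‖S t p q‖ := norm_le_pi_norm (S t p q) r
        _ ≤ ‖S t p‖ := norm_le_pi_norm (S t p) q
        _ ≤ ‖S t‖ := norm_le_pi_norm (S t) p
    have h1 : |S' t l i j| ≤ (∑ p, |X t i p| * ‖S t‖) + ∑ p, |X t j p| * ‖S t‖ := by
      refine (abs_add_le _ _).trans (add_le_add ?_ ?_) <;>
      · refine (Finset.abs_sum_le_sum_abs _ _).trans (Finset.sum_le_sum fun p _ => ?_)
        rw [abs_mul]
        exact mul_le_mul_of_nonneg_left (hSle l p _) (abs_nonneg _)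
    have h2 : ∀ q : Fin 3, (∑ p, |X t q p|) ≤ ∑ i, ∑ p, |X t i p| :=
      fun q => Finset.single_le_sum (f := fun i => ∑ p, |X t i p|)
        (fun i _ => Finset.sum_nonneg fun p _ => abs_nonneg _) (Finset.mem_univ q)
    calc ‖S' t l i j‖ = |S' t l i j| := rfl
      _ ≤ (∑ p, |X t i p|) * ‖S t‖ + (∑ p, |X t j p|) * ‖S t‖ := by
          rw [← Finset.sum_mul, ← Finset.sum_mul] at h1; exact h1
      _ ≤ (∑ i, ∑ p, |X t i p|) * ‖S t‖ + (∑ i, ∑ p, |X t i p|) * ‖S t‖ :=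
          add_le_add (mul_le_mul_of_nonneg_right (h2 i) (norm_nonneg _))
            (mul_le_mul_of_nonneg_right (h2 j) (norm_nonneg _))
      _ = (2 * ∑ i, ∑ p, |X t i p|) * ‖S t‖ := by ring
  have hzero : ∀ t, S t = 0 := by
    refine aux_zero_of_linear_bound' hderiv hCc hb ?_
    funext l i j
    exact h0 l i j
  intro t k i j
  have := congrFun (congrFun (congrFun (hzero t) i) k) j
  simp only [hSdef, Pi.zero_apply] at this
  linarith
end
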